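/- Let λ ∈ [0,1] with |λ − 1/2| > 1/5 and suppose 0 ≤ f(λ) ≤ f₀². Then, writing E₀ for the least eigenvalue of H̃(λ), every eigenvector of H̃(λ) orthogonal to a unit eigenvector with eigenvalue E₀ has eigenvalue at least E₀ + f₀αΔ. -/

import Mathlib

section Arith
lemma ar_le_one (a b : ℝ) (h : a^2 + b^2 = 1) (hb : 0 ≤ b) : b ≤ 1 := by
  nlinarith [sq_nonneg (b-1), sq_nonneg a]

lemma ar_fl100 (fl f₀ μ₀ : ℝ) (hμ₀ : 0 ≤ μ₀) (hμ₀' : μ₀ < 1) (hf₀ : f₀ = (1-μ₀)/10)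
    (hfl' : fl ≤ f₀^2) : fl ≤ 1/100 := by nlinarith [hfl']

lemma ar_A5 (l fl A s B : ℝ) (hfl : 0 ≤ fl) (hA0 : 0 ≤ A) (hB1 : B ≤ 1) (hl7 : 7/10 ≤ l)
    (h2 : (2*l-1)*A^2 + s^2 ≤ 2*fl*(A*B)) : A ≤ 5*fl := by
  have hA52 : A * A ≤ 5 * fl * A := by
    nlinarith [h2, sq_nonneg s, sq_nonneg A, mul_le_of_le_one_right hA0 hB1]
  rcases eq_or_lt_of_le hA0 with h | h
  · rw [← h]; positivity
  · exact le_of_mul_le_mul_right hA52 h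

lemma ar_s2 (l fl A s B : ℝ) (hfl : 0 ≤ fl) (hA0 : 0 ≤ A) (hA1 : A ≤ 1) (hB1 : B ≤ 1) (hB0 : 0 ≤ B)
    (hl7 : 7/10 ≤ l) (h2 : (2*l-1)*A^2 + s^2 ≤ 2*fl*(A*B)) : s^2 ≤ 2*fl := by
  nlinarith [h2, sq_nonneg A, mul_le_of_le_one_right hA0 hB1,
    mul_nonneg (mul_nonneg hfl hA0) hB0]

lemma ar_beta (fl A s B βn : ℝ) (hfl : 0 ≤ fl)
    (hAfl : A ≤ 5*fl) (hs2 : s^2 ≤ 2*fl) (hfl100 : fl ≤ 1/100) (hA0 : 0 ≤ A)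
    (hψsum : A^2 + B^2 = 1) (hpythb : B^2 = βn^2 + s^2) : 97/100 ≤ βn^2 := by
  nlinarith [hAfl, hs2, hfl100, hψsum, hpythb, sq_nonneg fl, hA0]

lemma ar_t1 (x wn cn t : ℝ) (h1 : wn^2 = cn^2 + t^2) (h2 : x^2 + wn^2 = 1) (ht : 0 ≤ t) : t ≤ 1 := by
  nlinarith [sq_nonneg (t-1), sq_nonneg x, sq_nonneg cn]

lemma ar_c05 (fl βn cn A x s t : ℝ) (hfl : 0 ≤ fl) (hfl100 : fl ≤ 1/100)
    (hA0 : 0 ≤ A) (hx0 : 0 ≤ x) (hs0 : 0 ≤ s) (ht0 : 0 ≤ t) (hβ0 : 0 ≤ βn) (hc0 : 0 ≤ cn)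
    (hx1 : x ≤ 1) (ht1 : t ≤ 1)
    (hAfl : A ≤ 5*fl) (hs2 : s^2 ≤ 2*fl) (hβlb : 97/100 ≤ βn^2)
    (habs : βn * cn ≤ A*x + s*t) : cn^2 ≤ 1/20 := by
  have hβc2 : (βn*cn)^2 ≤ (A*x+s*t)^2 :=
    pow_le_pow_left₀ (mul_nonneg hβ0 hc0) habs 2
  have hAx : A*x ≤ A := mul_le_of_le_one_right hA0 hx1
  have hst : s*t ≤ s := mul_le_of_le_one_right hs0 ht1
  have h45 : (A*x+s*t)^2 ≤ 2*A^2+2*s^2 := by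
    nlinarith [sq_nonneg (A-s), hAx, hst, mul_nonneg hA0 hx0, mul_nonneg hs0 ht0]
  have hA2 : A^2 ≤ 25*fl^2 := by nlinarith [hAfl, hA0]
  have h45b : 2*A^2+2*s^2 ≤ 9/200 := by nlinarith [hA2, hs2, hfl100, hfl]
  nlinarith [hβc2, h45, h45b, hβlb, sq_nonneg cn,
    mul_nonneg (by linarith : (0:ℝ) ≤ βn^2 - 97/100) (sq_nonneg cn)]

lemma ar_xt (x t cn wn : ℝ) (hpythw : wn^2 = cn^2 + t^2) (hc05 : cn^2 ≤ 1/20)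
    (hφsum : x^2 + wn^2 = 1) : 19/20 ≤ x^2 + t^2 := by nlinarith [hpythw, hc05, hφsum]

lemma ar_r (l fl x t xw : ℝ) (hx2t2 : 19/20 ≤ x^2+t^2) (hfl100 : fl ≤ 1/100) (hfl : 0 ≤ fl)
    (hl7 : 7/10 ≤ l) (hxw : x*xw ≤ 1) (hxw0 : 0 ≤ x*xw) :
    (1:ℝ)/10 ≤ (2*l-1)*x^2 + t^2 - 2*fl*(x*xw) := by
  nlinarith [hx2t2, hfl100, hfl, sq_nonneg x, sq_nonneg t,
    mul_nonneg (by linarith : (0:ℝ) ≤ 2*l-1-2/5) (sq_nonneg x)]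

lemma ar_main (Δ l x t wn fl : ℝ) (hΔ : 0 < Δ)
    (hr : (1:ℝ)/10 ≤ (2*l-1)*x^2 + t^2 - 2*fl*(x*wn)) :
    (1-l)*Δ + (1/10)*Δ ≤ l*Δ*x^2 + (1-l)*Δ*(1-x^2) + Δ*t^2 - 2*(fl*Δ)*(x*wn) := by
  nlinarith [mul_le_mul_of_nonneg_left hr hΔ.le]

lemma ar_h2 (Δ l fl A s B E₀ : ℝ) (hΔ : 0 < Δ)
    (hql : l*Δ*A^2 + (1-l)*Δ*B^2 + Δ*s^2 - 2*(fl*Δ)*(A*B) ≤ E₀)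
    (hub : E₀ ≤ (1-l)*Δ) (hsum : A^2 + B^2 = 1) :
    (2*l-1)*A^2 + s^2 ≤ 2*fl*(A*B) := by
  have hub2 : E₀ ≤ (1-l)*Δ*(A^2+B^2) := by rw [hsum, mul_one]; exact hub
  have h3 : Δ * ((2*l-1)*A^2 + s^2 - 2*fl*(A*B)) ≤ Δ * 0 := by
    rw [mul_zero]; linarith [hql, hub2]
  have := le_of_mul_le_mul_left h3 hΔ
  linarith

end Arith

section Helpers
variable {V : Type*} [NormedAddCommGroup V] [InnerProductSpace ℂ V]

variable {V : Type*} [NormedAddCommGroup V] [InnerProductSpace ℂ V]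

lemma aux_orth (η w : V) (hη : ‖η‖ = 1) :
    (inner ℂ η (w - (inner ℂ η w : ℂ) • η) : ℂ) = 0 := by
  simp [inner_sub_right, inner_smul_right, inner_self_eq_norm_sq_to_K, hη]

lemma aux_pyth (η w : V) (hη : ‖η‖ = 1) :
    ‖w‖ ^ 2 = ‖(inner ℂ η w : ℂ)‖ ^ 2 + ‖w - (inner ℂ η w : ℂ) • η‖ ^ 2 := by
  have h0 := aux_orth η w hη
  have h1 : ((inner ℂ η w : ℂ) • η) + (w - (inner ℂ η w : ℂ) • η) = w := by abel
  have h2 := @norm_add_sq ℂ _ _ _ _ ((inner ℂ η w : ℂ) • η) (w - (inner ℂ η w : ℂ) • η)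
  rw [h1] at h2
  have h3 : (inner ℂ ((inner ℂ η w : ℂ) • η) (w - (inner ℂ η w : ℂ) • η) : ℂ) = 0 := by
    rw [inner_smul_left, h0, mul_zero]
  rw [h3] at h2
  simp [norm_smul, hη, mul_pow] at h2
  simpa using h2

lemma aux_gap (Δ : ℝ) (hΔ : 0 ≤ Δ) (H : V →ₗ[ℂ] V) (hH : H.IsSymmetric)
    (η : V) (hη : ‖η‖ = 1) (hHη : H η = 0)
    (hgap : ∀ v : V, (inner ℂ η v : ℂ) = 0 → Δ * ‖v‖ ^ 2 ≤ ((inner ℂ v (H v) : ℂ)).re)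
    (w : V) :
    Δ * ‖w - (inner ℂ η w : ℂ) • η‖ ^ 2 ≤ ((inner ℂ w (H w) : ℂ)).re := by
  set c : ℂ := (inner ℂ η w : ℂ) with hc
  set w' := w - c • η with hw'
  have h0 : (inner ℂ η w' : ℂ) = 0 := aux_orth η w hη
  have hHw : H w = H w' := by
    rw [hw', map_sub, map_smul, hHη, smul_zero, sub_zero]
  have h2 : (inner ℂ w (H w) : ℂ) = inner ℂ w' (H w') := by
    rw [hHw, hw']
    rw [inner_sub_left, inner_smul_left]
    have : (inner ℂ η (H w') : ℂ) = 0 := by rw [← hH η w', hHη, inner_zero_left]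
    rw [this, mul_zero, sub_zero]
  rw [h2]
  exact hgap w' h0

variable {V : Type*} [NormedAddCommGroup V] [InnerProductSpace ℂ V]

lemma aux_inner_expand (Δ l fl : ℝ)
    (H₁ H₂ : V →ₗ[ℂ] V)
    (T : WithLp 2 (V × V) →ₗ[ℂ] WithLp 2 (V × V))
    (hT : ∀ u w : V, T ((WithLp.equiv 2 (V × V)).symm (u, w)) =
      (WithLp.equiv 2 (V × V)).symm
        (H₁ u + ((l * Δ : ℝ) : ℂ) • u + ((fl * Δ : ℝ) : ℂ) • w,
         H₂ w + (((1 - l) * Δ : ℝ) : ℂ) • w + ((fl * Δ : ℝ) : ℂ) • u))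
    (ψ : WithLp 2 (V × V)) :
    ((inner ℂ ψ (T ψ) : ℂ)).re =
      ((inner ℂ ψ.fst (H₁ ψ.fst) : ℂ)).re + l * Δ * ‖ψ.fst‖ ^ 2
      + ((inner ℂ ψ.snd (H₂ ψ.snd) : ℂ)).re + (1 - l) * Δ * ‖ψ.snd‖ ^ 2
      + 2 * (fl * Δ) * ((inner ℂ ψ.fst ψ.snd : ℂ)).re := by
  have h := hT ψ.fst ψ.snd
  have hps : ((WithLp.equiv 2 (V × V)).symm (ψ.fst, ψ.snd)) = ψ := rfl
  rw [hps] at h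
  rw [h, WithLp.prod_inner_apply]
  simp only [WithLp.ofLp_fst, WithLp.ofLp_snd]
  have hfst : ((WithLp.equiv 2 (V × V)).symm
      (H₁ ψ.fst + ((l * Δ : ℝ) : ℂ) • ψ.fst + ((fl * Δ : ℝ) : ℂ) • ψ.snd,
       H₂ ψ.snd + (((1 - l) * Δ : ℝ) : ℂ) • ψ.snd + ((fl * Δ : ℝ) : ℂ) • ψ.fst)).fst
      = H₁ ψ.fst + ((l * Δ : ℝ) : ℂ) • ψ.fst + ((fl * Δ : ℝ) : ℂ) • ψ.snd := rfl
  have hsnd : ((WithLp.equiv 2 (V × V)).symm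
      (H₁ ψ.fst + ((l * Δ : ℝ) : ℂ) • ψ.fst + ((fl * Δ : ℝ) : ℂ) • ψ.snd,
       H₂ ψ.snd + (((1 - l) * Δ : ℝ) : ℂ) • ψ.snd + ((fl * Δ : ℝ) : ℂ) • ψ.fst)).snd
      = H₂ ψ.snd + (((1 - l) * Δ : ℝ) : ℂ) • ψ.snd + ((fl * Δ : ℝ) : ℂ) • ψ.fst := rfl
  rw [hfst, hsnd]
  rw [inner_add_right, inner_add_right, inner_add_right, inner_add_right,
    inner_smul_right, inner_smul_right, inner_smul_right, inner_smul_right]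
  have hre : ((inner ℂ ψ.snd ψ.fst : ℂ)).re = ((inner ℂ ψ.fst ψ.snd : ℂ)).re := by
    rw [← inner_conj_symm]; exact Complex.conj_re _
  have huu : (inner ℂ ψ.fst ψ.fst : ℂ) = ((‖ψ.fst‖ ^ 2 : ℝ) : ℂ) := by
    rw [inner_self_eq_norm_sq_to_K]; norm_num
  have hww : (inner ℂ ψ.snd ψ.snd : ℂ) = ((‖ψ.snd‖ ^ 2 : ℝ) : ℂ) := by
    rw [inner_self_eq_norm_sq_to_K]; norm_num
  rw [huu, hww]
  simp only [Complex.add_re, Complex.re_ofReal_mul, Complex.ofReal_re]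
  rw [hre]
  ring

variable {V : Type*} [NormedAddCommGroup V] [InnerProductSpace ℂ V]

lemma aux_symm (Δ l fl : ℝ)
    (H₁ H₂ : V →ₗ[ℂ] V) (hH₁ : H₁.IsSymmetric) (hH₂ : H₂.IsSymmetric)
    (T : WithLp 2 (V × V) →ₗ[ℂ] WithLp 2 (V × V))
    (hT : ∀ u w : V, T ((WithLp.equiv 2 (V × V)).symm (u, w)) =
      (WithLp.equiv 2 (V × V)).symm
        (H₁ u + ((l * Δ : ℝ) : ℂ) • u + ((fl * Δ : ℝ) : ℂ) • w,
         H₂ w + (((1 - l) * Δ : ℝ) : ℂ) • w + ((fl * Δ : ℝ) : ℂ) • u)) :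
    T.IsSymmetric := by
  intro ψ χ
  have hψ := hT ψ.fst ψ.snd
  have hχ := hT χ.fst χ.snd
  have hpψ : ((WithLp.equiv 2 (V × V)).symm (ψ.fst, ψ.snd)) = ψ := rfl
  have hpχ : ((WithLp.equiv 2 (V × V)).symm (χ.fst, χ.snd)) = χ := rfl
  rw [hpψ] at hψ; rw [hpχ] at hχ
  rw [hψ, hχ, WithLp.prod_inner_apply, WithLp.prod_inner_apply]
  simp only [WithLp.ofLp_fst, WithLp.ofLp_snd]
  have e1 : ∀ (a b c : V) (x y : V),
      ((WithLp.equiv 2 (V × V)).symm ((a + x + y : V), (b : V))).fst = a + x + y := fun _ _ _ _ _ => rfl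
  simp only [WithLp.equiv_symm_apply, WithLp.toLp_fst, WithLp.toLp_snd]
  rw [inner_add_left, inner_add_left, inner_add_left, inner_add_left,
    inner_add_right, inner_add_right, inner_add_right, inner_add_right,
    inner_smul_left, inner_smul_left, inner_smul_left, inner_smul_left,
    inner_smul_right, inner_smul_right, inner_smul_right, inner_smul_right,
    hH₁ ψ.fst χ.fst, hH₂ ψ.snd χ.snd]
  simp only [Complex.conj_ofReal]
  ring

end Helpers

section Key
variable {V : Type*} [NormedAddCommGroup V] [InnerProductSpace ℂ V] [FiniteDimensional ℂ V]

lemma quad_lower (Δ l fl : ℝ) (hΔ : 0 < Δ) (hfl : 0 ≤ fl)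
    (H₁ H₂ : V →ₗ[ℂ] V) (hH₁ : H₁.IsSymmetric) (hH₂ : H₂.IsSymmetric)
    (ξ₀ η₀ : V) (hξ : ‖ξ₀‖ = 1) (hη : ‖η₀‖ = 1)
    (hH₁ξ : H₁ ξ₀ = 0) (hH₂η : H₂ η₀ = 0)
    (hgap₁ : ∀ v : V, (inner ℂ ξ₀ v : ℂ) = 0 → Δ * ‖v‖ ^ 2 ≤ ((inner ℂ v (H₁ v) : ℂ)).re)
    (hgap₂ : ∀ v : V, (inner ℂ η₀ v : ℂ) = 0 → Δ * ‖v‖ ^ 2 ≤ ((inner ℂ v (H₂ v) : ℂ)).re)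
    (T : WithLp 2 (V × V) →ₗ[ℂ] WithLp 2 (V × V))
    (hT : ∀ u w : V, T ((WithLp.equiv 2 (V × V)).symm (u, w)) =
      (WithLp.equiv 2 (V × V)).symm
        (H₁ u + ((l * Δ : ℝ) : ℂ) • u + ((fl * Δ : ℝ) : ℂ) • w,
         H₂ w + (((1 - l) * Δ : ℝ) : ℂ) • w + ((fl * Δ : ℝ) : ℂ) • u))
    (ψ : WithLp 2 (V × V)) :
    l * Δ * ‖ψ.fst‖ ^ 2 + (1 - l) * Δ * ‖ψ.snd‖ ^ 2
      + Δ * ‖ψ.snd - (inner ℂ η₀ ψ.snd : ℂ) • η₀‖ ^ 2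
      - 2 * (fl * Δ) * (‖ψ.fst‖ * ‖ψ.snd‖)
      ≤ ((inner ℂ ψ (T ψ) : ℂ)).re := by
  rw [aux_inner_expand Δ l fl H₁ H₂ T hT ψ]
  have h1 : (0:ℝ) ≤ ((inner ℂ ψ.fst (H₁ ψ.fst) : ℂ)).re := by
    refine le_trans ?_ (aux_gap Δ hΔ.le H₁ hH₁ ξ₀ hξ hH₁ξ hgap₁ ψ.fst)
    positivity
  have h2 := aux_gap Δ hΔ.le H₂ hH₂ η₀ hη hH₂η hgap₂ ψ.snd
  have h3 : -(‖ψ.fst‖ * ‖ψ.snd‖) ≤ ((inner ℂ ψ.fst ψ.snd : ℂ)).re := by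
    have ha : |((inner ℂ ψ.fst ψ.snd : ℂ)).re| ≤ ‖(inner ℂ ψ.fst ψ.snd : ℂ)‖ :=
      Complex.abs_re_le_norm _
    have hb := norm_inner_le_norm (𝕜 := ℂ) ψ.fst ψ.snd
    have := abs_le.1 (le_trans ha hb)
    linarith [this.1]
  nlinarith [mul_le_mul_of_nonneg_left h3 (show (0:ℝ) ≤ 2 * (fl * Δ) by positivity)]

lemma aux_E0_le (Δ l fl : ℝ) (hΔ : 0 < Δ) (hl0 : 0 ≤ l) (hl1 : l ≤ 1) (hfl : 0 ≤ fl)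
    (ξ₀ η₀ : V) (hξ : ‖ξ₀‖ = 1) (hη : ‖η₀‖ = 1)
    (T : WithLp 2 (V × V) →ₗ[ℂ] WithLp 2 (V × V))
    (hsym : T.IsSymmetric)
    (hql : ∀ ψ : WithLp 2 (V × V),
      l * Δ * ‖ψ.fst‖ ^ 2 + (1 - l) * Δ * ‖ψ.snd‖ ^ 2
      + Δ * ‖ψ.snd - (inner ℂ η₀ ψ.snd : ℂ) • η₀‖ ^ 2
      - 2 * (fl * Δ) * (‖ψ.fst‖ * ‖ψ.snd‖)
      ≤ ((inner ℂ ψ (T ψ) : ℂ)).re)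
    (hTχ : T ((WithLp.equiv 2 (V × V)).symm (0, η₀)) =
      (WithLp.equiv 2 (V × V)).symm (((fl * Δ : ℝ) : ℂ) • η₀, (((1 - l) * Δ : ℝ) : ℂ) • η₀))
    (E₀ : ℝ)
    (hE₀min : ∀ E : ℂ, Module.End.HasEigenvalue T E → E₀ ≤ E.re) :
    E₀ ≤ (1 - l) * Δ := by
  have hξne : ξ₀ ≠ 0 := by intro h; rw [h] at hξ; simp at hξ
  haveI : Nontrivial V := nontrivial_of_ne ξ₀ 0 hξne
  haveI : Nontrivial (WithLp 2 (V × V)) := inferInstance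
  have hmin := hsym.hasEigenvalue_iInf_of_finiteDimensional
  have h1 := hE₀min _ hmin
  have h1' : E₀ ≤ (⨅ x : {x : WithLp 2 (V × V) // x ≠ 0},
      RCLike.re (inner ℂ (T x) (x : WithLp 2 (V × V)) : ℂ) / ‖(x : WithLp 2 (V × V))‖ ^ 2) := by
    simpa using h1
  refine h1'.trans ?_
  set g : {x : WithLp 2 (V × V) // x ≠ 0} → ℝ :=
    fun x => RCLike.re (inner ℂ (T x) (x : WithLp 2 (V × V)) : ℂ) / ‖(x : WithLp 2 (V × V))‖ ^ 2 with hg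
  have key : ∀ x : {x : WithLp 2 (V × V) // x ≠ 0}, -(fl * Δ) ≤ g x := by
    intro x
    have hxn : (0:ℝ) < ‖(x : WithLp 2 (V × V))‖ ^ 2 :=
      pow_pos (norm_pos_iff.mpr x.2) 2
    have hre : RCLike.re (inner ℂ (T x) (x : WithLp 2 (V × V)) : ℂ)
        = ((inner ℂ (x : WithLp 2 (V × V)) (T x) : ℂ)).re := by
      simp only [RCLike.re_to_complex]
      rw [← inner_conj_symm, Complex.conj_re]
    rw [hg]
    simp only
    rw [hre, le_div_iff₀ hxn]
    have hql' := hql (x : WithLp 2 (V × V))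
    have hnx : ‖(x : WithLp 2 (V × V))‖ ^ 2
        = ‖(x : WithLp 2 (V × V)).fst‖ ^ 2 + ‖(x : WithLp 2 (V × V)).snd‖ ^ 2 :=
      WithLp.prod_norm_sq_eq_of_L2 _
    set a := ‖(x : WithLp 2 (V × V)).fst‖
    set b := ‖(x : WithLp 2 (V × V)).snd‖
    set t := ‖(x : WithLp 2 (V × V)).snd - (inner ℂ η₀ (x : WithLp 2 (V × V)).snd : ℂ) • η₀‖
    have c1 : 0 ≤ l * Δ * a ^ 2 := by positivity
    have c2 : 0 ≤ (1 - l) * Δ * b ^ 2 := by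
      have : (0:ℝ) ≤ 1 - l := by linarith
      positivity
    have c3 : 0 ≤ Δ * t ^ 2 := by positivity
    have c4 : 0 ≤ fl * Δ * (a - b) ^ 2 := by positivity
    rw [hnx]
    nlinarith [hql']
  have hbdd : BddBelow (Set.range g) := by
    refine ⟨-(fl * Δ), ?_⟩
    rintro y ⟨x, rfl⟩
    exact key x
  refine (ciInf_le hbdd
    ⟨(WithLp.equiv 2 (V × V)).symm (0, η₀), ?_⟩).trans_eq ?_
  · intro h
    have he : ((WithLp.equiv 2 (V × V)).symm ((0:V), η₀)).snd = η₀ := rfl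
    rw [h] at he
    apply_fun norm at he
    simp [hη] at he
  · rw [hg]
    simp only
    have h2 : (inner ℂ (T ((WithLp.equiv 2 (V × V)).symm (0, η₀)))
        ((WithLp.equiv 2 (V × V)).symm ((0:V), η₀)) : ℂ) = (((1 - l) * Δ : ℝ) : ℂ) := by
      rw [hTχ, WithLp.prod_inner_apply]
      simp only [WithLp.ofLp_fst, WithLp.ofLp_snd]
      have e1 : ((WithLp.equiv 2 (V × V)).symm
        (((fl * Δ : ℝ) : ℂ) • η₀, (((1 - l) * Δ : ℝ) : ℂ) • η₀)).fst = ((fl * Δ : ℝ) : ℂ) • η₀ := rfl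
      have e2 : ((WithLp.equiv 2 (V × V)).symm
        (((fl * Δ : ℝ) : ℂ) • η₀, (((1 - l) * Δ : ℝ) : ℂ) • η₀)).snd = (((1 - l) * Δ : ℝ) : ℂ) • η₀ := rfl
      have e3 : ((WithLp.equiv 2 (V × V)).symm ((0:V), η₀)).fst = (0:V) := rfl
      have e4 : ((WithLp.equiv 2 (V × V)).symm ((0:V), η₀)).snd = η₀ := rfl
      rw [e1, e2, e3, e4, inner_zero_right, inner_smul_left, inner_self_eq_norm_sq_to_K, hη]
      simp [Complex.conj_ofReal]
    have h3 : ‖((WithLp.equiv 2 (V × V)).symm ((0:V), η₀))‖ ^ 2 = 1 := by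
      rw [WithLp.prod_norm_sq_eq_of_L2]
      have e3 : ((WithLp.equiv 2 (V × V)).symm ((0:V), η₀)).fst = (0:V) := rfl
      have e4 : ((WithLp.equiv 2 (V × V)).symm ((0:V), η₀)).snd = η₀ := rfl
      rw [e3, e4, hη]; simp
    rw [h2, h3]
    simp [RCLike.re_to_complex]

set_option maxHeartbeats 2000000 in
theorem key_lemma
    (Δ μ₀ f₀ : ℝ) (hΔ : 0 < Δ) (hμ₀ : 0 ≤ μ₀) (hμ₀' : μ₀ < 1)
    (hf₀ : f₀ = (1 - μ₀) / 10)
    (H₁ H₂ : V →ₗ[ℂ] V) (hH₁ : H₁.IsSymmetric) (hH₂ : H₂.IsSymmetric)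
    (ξ₀ η₀ : V) (hξ : ‖ξ₀‖ = 1) (hη : ‖η₀‖ = 1)
    (hH₁ξ : H₁ ξ₀ = 0) (hH₂η : H₂ η₀ = 0)
    (hgap₁ : ∀ v : V, (inner ℂ ξ₀ v : ℂ) = 0 → Δ * ‖v‖ ^ 2 ≤ ((inner ℂ v (H₁ v) : ℂ)).re)
    (hgap₂ : ∀ v : V, (inner ℂ η₀ v : ℂ) = 0 → Δ * ‖v‖ ^ 2 ≤ ((inner ℂ v (H₂ v) : ℂ)).re)
    (α : ℝ) (hα : (inner ℂ ξ₀ η₀ : ℂ) = (α : ℂ)) (hα' : 1 - μ₀ ≤ α)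
    (l fl : ℝ) (hl0 : 0 ≤ l) (hl1 : l ≤ 1) (hl7 : 7/10 ≤ l)
    (hfl : 0 ≤ fl) (hfl' : fl ≤ f₀ ^ 2)
    (T : WithLp 2 (V × V) →ₗ[ℂ] WithLp 2 (V × V))
    (hT : ∀ u w : V, T ((WithLp.equiv 2 (V × V)).symm (u, w)) =
      (WithLp.equiv 2 (V × V)).symm
        (H₁ u + ((l * Δ : ℝ) : ℂ) • u + ((fl * Δ : ℝ) : ℂ) • w,
         H₂ w + (((1 - l) * Δ : ℝ) : ℂ) • w + ((fl * Δ : ℝ) : ℂ) • u))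
    (E₀ : ℝ) (hE₀ : Module.End.HasEigenvalue T (E₀ : ℂ))
    (hE₀min : ∀ E : ℂ, Module.End.HasEigenvalue T E → E₀ ≤ E.re) :
    ∀ ψ₀ : WithLp 2 (V × V), ‖ψ₀‖ = 1 → T ψ₀ = (E₀ : ℂ) • ψ₀ →
      ∀ (E : ℂ) (φ : WithLp 2 (V × V)), φ ≠ 0 → (inner ℂ ψ₀ φ : ℂ) = 0 → T φ = E • φ →
        E₀ + f₀ * α * Δ ≤ E.re := by
  intro ψ₀ hψn hψe E φ hφne horth hTφE
  -- basic numerology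
  have hf₀0 : 0 ≤ f₀ := by rw [hf₀]; linarith
  have hf₀10 : f₀ ≤ 1/10 := by rw [hf₀]; linarith
  have hfl100 : fl ≤ 1/100 := ar_fl100 fl f₀ μ₀ hμ₀ hμ₀' hf₀ hfl'
  have hα1 : α ≤ 1 := by
    have h := norm_inner_le_norm (𝕜 := ℂ) ξ₀ η₀
    rw [hα, hξ, hη, Complex.norm_real, Real.norm_eq_abs] at h
    have := le_abs_self α
    linarith
  -- quadratic form lemmas
  have hql := quad_lower Δ l fl hΔ hfl H₁ H₂ hH₁ hH₂ ξ₀ η₀ hξ hη hH₁ξ hH₂η hgap₁ hgap₂ T hT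
  have hsym := aux_symm Δ l fl H₁ H₂ hH₁ hH₂ T hT
  -- upper bound on E₀
  have hTχ : T ((WithLp.equiv 2 (V × V)).symm (0, η₀)) =
      (WithLp.equiv 2 (V × V)).symm (((fl * Δ : ℝ) : ℂ) • η₀, (((1 - l) * Δ : ℝ) : ℂ) • η₀) := by
    have h := hT 0 η₀
    simpa [hH₂η] using h
  have hE0ub : E₀ ≤ (1 - l) * Δ :=
    aux_E0_le Δ l fl hΔ hl0 hl1 hfl ξ₀ η₀ hξ hη T hsym hql hTχ E₀ hE₀min
  -- normalize φ
  set n : ℝ := ‖φ‖ with hn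
  have hnpos : 0 < n := norm_pos_iff.mpr hφne
  set φ' : WithLp 2 (V × V) := ((n⁻¹ : ℝ) : ℂ) • φ with hφ'
  have hφ'n : ‖φ'‖ = 1 := by
    rw [hφ', norm_smul]
    simp only [Complex.norm_real, Real.norm_eq_abs, abs_of_pos (inv_pos.2 hnpos)]
    exact inv_mul_cancel₀ hnpos.ne'
  have hTφ' : T φ' = E • φ' := by rw [hφ', map_smul, hTφE, smul_comm]
  have horth' : (inner ℂ ψ₀ φ' : ℂ) = 0 := by rw [hφ', inner_smul_right, horth, mul_zero]
  -- names
  set a : V := ψ₀.fst with ha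
  set b : V := ψ₀.snd with hb
  set u : V := φ'.fst with hu
  set w : V := φ'.snd with hw
  set β : ℂ := (inner ℂ η₀ b : ℂ) with hβ
  set c : ℂ := (inner ℂ η₀ w : ℂ) with hc
  set A : ℝ := ‖a‖ with hA
  set s : ℝ := ‖b - β • η₀‖ with hs
  set x : ℝ := ‖u‖ with hx
  set t : ℝ := ‖w - c • η₀‖ with ht
  have hψsum : A ^ 2 + ‖b‖ ^ 2 = 1 := by
    rw [hA, hb, ha, ← WithLp.prod_norm_sq_eq_of_L2, hψn]; norm_num
  have hφsum : x ^ 2 + ‖w‖ ^ 2 = 1 := by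
    rw [hx, hw, hu, ← WithLp.prod_norm_sq_eq_of_L2, hφ'n]; norm_num
  have hA0 : 0 ≤ A := norm_nonneg _
  have hx0 : 0 ≤ x := norm_nonneg _
  have hs0 : 0 ≤ s := norm_nonneg _
  have ht0 : 0 ≤ t := norm_nonneg _
  have hb1 : ‖b‖ ≤ 1 := ar_le_one A ‖b‖ hψsum (norm_nonneg b)
  have hw1 : ‖w‖ ≤ 1 := ar_le_one x ‖w‖ hφsum (norm_nonneg w)
  have hA1 : A ≤ 1 := ar_le_one ‖b‖ A (by linarith [hψsum]) hA0
  have hx1 : x ≤ 1 := ar_le_one ‖w‖ x (by linarith [hφsum]) hx0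
  -- E₀ as Rayleigh quotient of ψ₀
  have hE0eq : ((inner ℂ ψ₀ (T ψ₀) : ℂ)).re = E₀ := by
    rw [hψe, inner_smul_right, inner_self_eq_norm_sq_to_K, hψn]
    simp
  -- ψ₀ structure bounds
  have hqlψ := hql ψ₀
  rw [hE0eq] at hqlψ
  have h2 : (2 * l - 1) * A ^ 2 + s ^ 2 ≤ 2 * fl * (A * ‖b‖) :=
    ar_h2 Δ l fl A s ‖b‖ E₀ hΔ hqlψ hE0ub hψsum
  have hAfl : A ≤ 5 * fl := ar_A5 l fl A s ‖b‖ hfl hA0 hb1 hl7 h2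
  have hs2 : s ^ 2 ≤ 2 * fl := ar_s2 l fl A s ‖b‖ hfl hA0 hA1 hb1 (norm_nonneg b) hl7 h2
  -- β lower bound
  have hpythb := aux_pyth η₀ b hη
  rw [← hβ, ← hs] at hpythb
  have hβlb : 97/100 ≤ ‖β‖ ^ 2 := ar_beta fl A s ‖b‖ ‖β‖ hfl hAfl hs2 hfl100 hA0 hψsum hpythb
  -- orthogonality gives |c| small
  have hpythw := aux_pyth η₀ w hη
  rw [← hc, ← ht] at hpythw
  have h0 : (inner ℂ a u : ℂ) + (inner ℂ b w : ℂ) = 0 := by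
    rw [ha, hb, hu, hw]; exact horth'
  have hbw : (inner ℂ b w : ℂ) = (starRingEnd ℂ) β * c + (inner ℂ (b - β • η₀) (w - c • η₀) : ℂ) := by
    conv_lhs => rw [show b = β • η₀ + (b - β • η₀) by abel, show w = c • η₀ + (w - c • η₀) by abel]
    rw [inner_add_left, inner_add_right, inner_add_right, inner_smul_left, inner_smul_right,
      inner_smul_right, inner_self_eq_norm_sq_to_K, hη]
    have o1 : (inner ℂ η₀ (w - c • η₀) : ℂ) = 0 := aux_orth η₀ w hη
    have o2 : (inner ℂ (b - β • η₀) η₀ : ℂ) = 0 := by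
      rw [← inner_conj_symm, aux_orth η₀ b hη, map_zero]
    rw [inner_smul_left, o1, o2]
    push_cast; ring
  have habs : ‖β‖ * ‖c‖ ≤ A * x + s * t := by
    have he : (starRingEnd ℂ) β * c = -(inner ℂ a u : ℂ) + -(inner ℂ (b - β • η₀) (w - c • η₀) : ℂ) := by
      have := h0
      rw [hbw] at this
      linear_combination this
    have h1 : ‖(starRingEnd ℂ) β * c‖ ≤ ‖(inner ℂ a u : ℂ)‖ + ‖(inner ℂ (b - β • η₀) (w - c • η₀) : ℂ)‖ := by
      rw [he]
      exact (norm_add_le _ _).trans (by rw [norm_neg, norm_neg])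
    rw [norm_mul, RCLike.norm_conj] at h1
    exact h1.trans (add_le_add (norm_inner_le_norm _ _) (norm_inner_le_norm _ _))
  -- |c|² ≤ 1/20
  have ht1 : t ≤ 1 := ar_t1 x ‖w‖ ‖c‖ t hpythw hφsum ht0
  have hc05 : ‖c‖ ^ 2 ≤ 1/20 :=
    ar_c05 fl ‖β‖ ‖c‖ A x s t hfl hfl100 hA0 hx0 hs0 ht0 (norm_nonneg β) (norm_nonneg c)
      hx1 ht1 hAfl hs2 hβlb habs
  have hx2t2 : 19/20 ≤ x ^ 2 + t ^ 2 := ar_xt x t ‖c‖ ‖w‖ hpythw hc05 hφsum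
  -- final assembly
  have hEre : E.re = ((inner ℂ φ' (T φ') : ℂ)).re := by
    rw [hTφ', inner_smul_right, inner_self_eq_norm_sq_to_K, hφ'n]
    simp
  have hqlφ := hql φ'
  rw [← hu, ← hw, ← hc, ← hx, ← ht] at hqlφ
  have hr : (1:ℝ)/10 ≤ (2 * l - 1) * x ^ 2 + t ^ 2 - 2 * fl * (x * ‖w‖) :=
    ar_r l fl x t ‖w‖ hx2t2 hfl100 hfl hl7 (mul_le_one₀ hx1 (norm_nonneg w) hw1)
      (mul_nonneg hx0 (norm_nonneg w))
  have hmain : (1 - l) * Δ + (1/10) * Δ ≤ E.re := by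
    rw [hEre]
    refine le_trans ?_ hqlφ
    have hw2 : ‖w‖ ^ 2 = 1 - x ^ 2 := by linarith [hφsum]
    rw [hw2]
    exact ar_main Δ l x t ‖w‖ fl hΔ hr
  have hfa : f₀ * α * Δ ≤ (1/10) * Δ := by
    have : f₀ * α ≤ 1/10 := le_trans (mul_le_of_le_one_right hf₀0 hα1) hf₀10
    exact mul_le_mul_of_nonneg_right this hΔ.le
  linarith

end Key

section Main

noncomputable def swapMap (V : Type*) [NormedAddCommGroup V] [InnerProductSpace ℂ V] :
    WithLp 2 (V × V) →ₗ[ℂ] WithLp 2 (V × V) where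
  toFun ψ := (WithLp.equiv 2 (V × V)).symm (ψ.snd, ψ.fst)
  map_add' _ _ := rfl
  map_smul' _ _ := rfl

/-- For `λ ∈ [0,1]` with `|λ − 1/2| > 1/5` and `0 ≤ f(λ) ≤ f₀²`, writing `E₀`
for the least eigenvalue of `H̃(λ)`, every eigenvector of `H̃(λ)` orthogonal to a unit
eigenvector with eigenvalue `E₀` has eigenvalue at least `E₀ + f₀αΔ`. -/
theorem gap_lemma_outer_region
    {V : Type*} [NormedAddCommGroup V] [InnerProductSpace ℂ V] [FiniteDimensional ℂ V]
    (Δ μ₀ f₀ : ℝ) (hΔ : 0 < Δ) (hμ₀ : 0 ≤ μ₀) (hμ₀' : μ₀ < 1)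
    (hf₀ : f₀ = (1 - μ₀) / 10)
    (H₁ H₂ : V →ₗ[ℂ] V) (hH₁ : H₁.IsSymmetric) (hH₂ : H₂.IsSymmetric)
    (ξ₀ η₀ : V) (hξ : ‖ξ₀‖ = 1) (hη : ‖η₀‖ = 1)
    (hH₁ξ : H₁ ξ₀ = 0) (hH₂η : H₂ η₀ = 0)
    (hgap₁ : ∀ v : V, (inner ℂ ξ₀ v : ℂ) = 0 → Δ * ‖v‖ ^ 2 ≤ ((inner ℂ v (H₁ v) : ℂ)).re)
    (hgap₂ : ∀ v : V, (inner ℂ η₀ v : ℂ) = 0 → Δ * ‖v‖ ^ 2 ≤ ((inner ℂ v (H₂ v) : ℂ)).re)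
    (α : ℝ) (hα : (inner ℂ ξ₀ η₀ : ℂ) = (α : ℂ)) (hα' : 1 - μ₀ ≤ α)
    (f : ℝ → ℝ) (l : ℝ) (hl : l ∈ Set.Icc (0:ℝ) 1) (hl' : 1/5 < |l - 1/2|)
    (hfl : 0 ≤ f l) (hfl' : f l ≤ f₀ ^ 2)
    (T : WithLp 2 (V × V) →ₗ[ℂ] WithLp 2 (V × V))
    (hT : ∀ u w : V, T ((WithLp.equiv 2 (V × V)).symm (u, w)) =
      (WithLp.equiv 2 (V × V)).symm
        (H₁ u + ((l * Δ : ℝ) : ℂ) • u + ((f l * Δ : ℝ) : ℂ) • w,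
         H₂ w + (((1 - l) * Δ : ℝ) : ℂ) • w + ((f l * Δ : ℝ) : ℂ) • u))
    (E₀ : ℝ) (hE₀ : Module.End.HasEigenvalue T (E₀ : ℂ))
    (hE₀min : ∀ E : ℂ, Module.End.HasEigenvalue T E → E₀ ≤ E.re) :
    ∀ ψ₀ : WithLp 2 (V × V), ‖ψ₀‖ = 1 → T ψ₀ = (E₀ : ℂ) • ψ₀ →
      ∀ (E : ℂ) (φ : WithLp 2 (V × V)), φ ≠ 0 → (inner ℂ ψ₀ φ : ℂ) = 0 → T φ = E • φ →
        E₀ + f₀ * α * Δ ≤ E.re := by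
  rcases le_or_gt (1/2) l with hcase | hcase
  · have hl7 : 7/10 ≤ l := by
      rw [abs_of_nonneg (by linarith)] at hl'
      linarith
    exact key_lemma Δ μ₀ f₀ hΔ hμ₀ hμ₀' hf₀ H₁ H₂ hH₁ hH₂ ξ₀ η₀ hξ hη hH₁ξ hH₂η hgap₁ hgap₂
      α hα hα' l (f l) hl.1 hl.2 hl7 hfl hfl' T hT E₀ hE₀ hE₀min
  · have hl3 : l ≤ 3/10 := by
      rw [abs_of_neg (by linarith)] at hl'
      linarith
    set S := swapMap V with hS
    have hSS : ∀ ψ : WithLp 2 (V × V), S (S ψ) = ψ := fun _ => rfl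
    have hSne : ∀ ψ : WithLp 2 (V × V), ψ ≠ 0 → S ψ ≠ 0 := by
      intro ψ h h0
      exact h (by rw [← hSS ψ, h0, map_zero])
    set T' : WithLp 2 (V × V) →ₗ[ℂ] WithLp 2 (V × V) := S ∘ₗ T ∘ₗ S with hT'def
    have hT'app : ∀ χ, T' χ = S (T (S χ)) := fun _ => rfl
    have hTapp : ∀ χ, T χ = S (T' (S χ)) := fun _ => rfl
    have hT' : ∀ u w : V, T' ((WithLp.equiv 2 (V × V)).symm (u, w)) =
        (WithLp.equiv 2 (V × V)).symm
          (H₂ u + (((1 - l) * Δ : ℝ) : ℂ) • u + ((f l * Δ : ℝ) : ℂ) • w,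
           H₁ w + (((1 - (1 - l)) * Δ : ℝ) : ℂ) • w + ((f l * Δ : ℝ) : ℂ) • u) := by
      intro u w
      have h : (1:ℝ) - (1 - l) = l := by ring
      rw [h]
      have h1 : T' ((WithLp.equiv 2 (V × V)).symm (u, w))
          = S (T ((WithLp.equiv 2 (V × V)).symm (w, u))) := rfl
      rw [h1, hT w u]
      rfl
    have htr : ∀ (R R' : WithLp 2 (V × V) →ₗ[ℂ] WithLp 2 (V × V)),
        (∀ χ, R' χ = S (R (S χ))) → ∀ μ : ℂ,
        Module.End.HasEigenvalue R μ → Module.End.HasEigenvalue R' μ := by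
      intro R R' hR μ hμ
      obtain ⟨v, hv⟩ := hμ.exists_hasEigenvector
      refine Module.End.hasEigenvalue_of_hasEigenvector
        (⟨Module.End.mem_eigenspace_iff.2 ?_, hSne v hv.2⟩ :
          Module.End.HasEigenvector R' μ (S v))
      rw [hR (S v), hSS, hv.apply_eq_smul, map_smul]
    have hSinner : ∀ ψ χ : WithLp 2 (V × V), (inner ℂ (S ψ) (S χ) : ℂ) = inner ℂ ψ χ := by
      intro ψ χ
      rw [WithLp.prod_inner_apply, WithLp.prod_inner_apply]
      exact add_comm _ _
    have hSnorm : ∀ ψ : WithLp 2 (V × V), ‖S ψ‖ = ‖ψ‖ := by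
      intro ψ
      have h2 : ‖S ψ‖ ^ 2 = ‖ψ‖ ^ 2 := by
        rw [WithLp.prod_norm_sq_eq_of_L2, WithLp.prod_norm_sq_eq_of_L2]
        exact add_comm _ _
      have := congrArg Real.sqrt h2
      rwa [Real.sqrt_sq (norm_nonneg _), Real.sqrt_sq (norm_nonneg _)] at this
    have hα'' : (inner ℂ η₀ ξ₀ : ℂ) = (α : ℂ) := by
      rw [← inner_conj_symm, hα]
      exact Complex.conj_ofReal α
    intro ψ₀ hψn hψe E φ hφne horth hTφE
    refine key_lemma Δ μ₀ f₀ hΔ hμ₀ hμ₀' hf₀ H₂ H₁ hH₂ hH₁ η₀ ξ₀ hη hξ hH₂η hH₁ξ hgap₂ hgap₁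
      α hα'' hα' (1 - l) (f l) (by linarith [hl.2]) (by linarith [hl.1]) (by linarith)
      hfl hfl' T' hT' E₀ (htr T T' hT'app _ hE₀)
      (fun E' hE' => hE₀min E' (htr T' T hTapp E' hE'))
      (S ψ₀) (by rw [hSnorm]; exact hψn)
      (by rw [hT'app, hSS, hψe, map_smul])
      E (S φ) (hSne φ hφne)
      (by rw [hSinner]; exact horth)
      (by rw [hT'app, hSS, hTφE, map_smul])

end Main
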